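/- If v(t,x,y) = (x+y)^p u(t, y/(x+y)) with u ∈ C^{1,2}, then the second-order HJB operator transforms as: -v_t + L v = (x+y)^p [-u_t(t,z) + D u(t,z)], where z = y/(x+y), (L v)(t,x,y) = -½σ²y²v_yy - μy v_y - rx v_x + βv, and (D u)(t,z) = -p(A - ½σ²(1-p)(z-θ)²)u + (1-p)σ²z(1-z)(z-θ)u_z - ½σ²z²(1-z)²u_zz. -/

import Mathlib

open Real Set

lemma zderiv (x w : ℝ) (h : x + w ≠ 0) :
    HasDerivAt (fun w' => w' / (x + w')) (x / (x + w) ^ 2) w := by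
  have h1 : HasDerivAt (fun w' : ℝ => w') 1 w := hasDerivAt_id w
  have h2 : HasDerivAt (fun w' : ℝ => x + w') 1 w := by
    simpa using (hasDerivAt_id w).const_add x
  have := h1.div h2 h
  exact this.congr_deriv (by ring)
lemma zderiv2 (x w : ℝ) (h : x + w ≠ 0) :
    HasDerivAt (fun x' => w / (x' + w)) (-w / (x + w) ^ 2) x := by
  have h1 : HasDerivAt (fun x' : ℝ => (w:ℝ)) 0 x := hasDerivAt_const x w
  have h2 : HasDerivAt (fun x' : ℝ => x' + w) 1 x := by
    simpa using (hasDerivAt_id x).add_const w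
  have := h1.div h2 h
  exact this.congr_deriv (by ring)

lemma powderiv (x q w : ℝ) (h : 0 < x + w) :
    HasDerivAt (fun w' => (x + w') ^ q) (q * (x + w) ^ (q - 1)) w := by
  have h1 := (Real.hasDerivAt_rpow_const (x := x + w) (p := q) (Or.inl h.ne'))
  have h2 : HasDerivAt (fun w' : ℝ => x + w') 1 w := by
    simpa using (hasDerivAt_id w).const_add x
  simpa [Function.comp_def] using h1.comp w h2

lemma powderiv2 (x q w : ℝ) (h : 0 < x + w) :
    HasDerivAt (fun x' => (x' + w) ^ q) (q * (x + w) ^ (q - 1)) x := by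
  have h1 := (Real.hasDerivAt_rpow_const (x := x + w) (p := q) (Or.inl h.ne'))
  have h2 : HasDerivAt (fun x' : ℝ => x' + w) 1 x := by
    simpa using (hasDerivAt_id x).add_const w
  simpa [Function.comp_def] using h1.comp x h2

lemma auxy (x q w : ℝ) (f : ℝ → ℝ) (f' : ℝ) (h : 0 < x + w)
    (hf : HasDerivAt f f' (w / (x + w))) :
    HasDerivAt (fun w' => (x + w') ^ q * f (w' / (x + w')))
      (q * (x + w) ^ (q - 1) * f (w / (x + w))
        + (x + w) ^ q * (f' * (x / (x + w) ^ 2))) w :=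
  (powderiv x q w h).mul (hf.comp w (zderiv x w h.ne'))

lemma auxx (x q w : ℝ) (f : ℝ → ℝ) (f' : ℝ) (h : 0 < x + w)
    (hf : HasDerivAt f f' (w / (x + w))) :
    HasDerivAt (fun x' => (x' + w) ^ q * f (w / (x' + w)))
      (q * (x + w) ^ (q - 1) * f (w / (x + w))
        + (x + w) ^ q * (f' * (-w / (x + w) ^ 2))) x :=
  (powderiv2 x q w h).mul (hf.comp x (zderiv2 x w h.ne'))

set_option maxHeartbeats 2000000 in
theorem stmt2 (p lam T mu0 r sig be th A : ℝ) (hp1 : p < 1) (hp0 : p ≠ 0)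
    (hlam : lam ∈ Ioo (0:ℝ) 1) (hT : 0 < T) (hsig : 0 < sig)
    (hth : th = (mu0 - r) / ((1 - p) * sig ^ 2))
    (hA : A = r - be / p + (mu0 - r) * th - (1/2) * (1 - p) * sig ^ 2 * th ^ 2)
    (u ut uz uzz : ℝ → ℝ → ℝ)
    (hut : ∀ t ∈ Icc (0:ℝ) T, ∀ z ∈ Ioo (-(1/lam)) (1/lam),
      HasDerivAt (fun s => u s z) (ut t z) t)
    (huz : ∀ t ∈ Icc (0:ℝ) T, ∀ z ∈ Ioo (-(1/lam)) (1/lam),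
      HasDerivAt (u t) (uz t z) z)
    (huzz : ∀ t ∈ Icc (0:ℝ) T, ∀ z ∈ Ioo (-(1/lam)) (1/lam),
      HasDerivAt (uz t) (uzz t z) z)
    (v : ℝ → ℝ → ℝ → ℝ)
    (hv : ∀ t x y, v t x y = (x + y) ^ p * u t (y / (x + y)))
    (t x y : ℝ) (ht : t ∈ Icc (0:ℝ) T) (hxy : 0 < x + y)
    (hz : y / (x + y) ∈ Ioo (-(1/lam)) (1/lam)) :
    -(deriv (fun s => v s x y) t)
      + (-(1/2) * sig ^ 2 * y ^ 2 * deriv (fun y' => deriv (fun y'' => v t x y'') y') y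
          - mu0 * y * deriv (fun y' => v t x y') y
          - r * x * deriv (fun x' => v t x' y) x
          + be * v t x y)
      = (x + y) ^ p *
          (-(ut t (y / (x + y)))
            + (-p * (A - (1/2) * sig ^ 2 * (1 - p) * (y / (x + y) - th) ^ 2)
                  * u t (y / (x + y))
                + (1 - p) * sig ^ 2 * (y / (x + y)) * (1 - y / (x + y))
                    * (y / (x + y) - th) * uz t (y / (x + y))
                - (1/2) * sig ^ 2 * (y / (x + y)) ^ 2 * (1 - y / (x + y)) ^ 2
                    * uzz t (y / (x + y)))) := by
  have hsne : x + y ≠ 0 := hxy.ne'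
  set z := y / (x + y) with hzdef
  -- time derivative
  have hdt : deriv (fun s => v s x y) t = (x + y) ^ p * ut t z := by
    have h := ((hut t ht z hz).const_mul ((x + y) ^ p))
    have h2 : HasDerivAt (fun s => v s x y) ((x + y) ^ p * ut t z) t := by
      simp only [hv]; exact h
    exact h2.deriv
  -- x derivative
  have hdx : deriv (fun x' => v t x' y) x
      = p * (x + y) ^ (p - 1) * u t z + (x + y) ^ p * (uz t z * (-y / (x + y) ^ 2)) := by
    have h2 : HasDerivAt (fun x' => v t x' y)
        (p * (x + y) ^ (p - 1) * u t z + (x + y) ^ p * (uz t z * (-y / (x + y) ^ 2))) x := by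
      simp only [hv]; exact auxx x p y (u t) (uz t z) hxy (huz t ht z hz)
    exact h2.deriv
  -- y derivative (as a function near y)
  have hdy' : ∀ w, 0 < x + w → w / (x + w) ∈ Ioo (-(1/lam)) (1/lam) →
      HasDerivAt (fun y'' => v t x y'')
        (p * (x + w) ^ (p - 1) * u t (w / (x + w))
          + (x + w) ^ p * (uz t (w / (x + w)) * (x / (x + w) ^ 2))) w := by
    intro w h1 h2
    simp only [hv]; exact auxy x p w (u t) (uz t (w / (x + w))) h1 (huz t ht _ h2)
  have hdy : deriv (fun y' => v t x y') y
      = p * (x + y) ^ (p - 1) * u t z + (x + y) ^ p * (uz t z * (x / (x + y) ^ 2)) :=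
    (hdy' y hxy hz).deriv
  -- second y derivative
  have e1 : ∀ᶠ w in nhds y, 0 < x + w := by
    have hc : ContinuousAt (fun w : ℝ => x + w) y := by fun_prop
    exact hc.eventually_mem (isOpen_Ioi.mem_nhds hxy)
  have e2 : ∀ᶠ w in nhds y, w / (x + w) ∈ Ioo (-(1/lam)) (1/lam) := by
    have hc : ContinuousAt (fun w : ℝ => w / (x + w)) y :=
      ContinuousAt.div (by fun_prop) (by fun_prop) hsne
    exact hc.eventually_mem (isOpen_Ioo.mem_nhds hz)
  have hEq : (fun w => deriv (fun y'' => v t x y'') w) =ᶠ[nhds y]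
      (fun w => p * ((x + w) ^ (p - 1) * u t (w / (x + w)))
        + x * ((x + w) ^ (p - 2) * uz t (w / (x + w)))) := by
    filter_upwards [e1, e2] with w h1 h2
    rw [(hdy' w h1 h2).deriv]
    have hpow : (x + w) ^ p = (x + w) ^ (p - 2) * (x + w) ^ 2 := by
      rw [← Real.rpow_natCast (x + w) 2, ← Real.rpow_add h1]
      norm_num
    rw [hpow]
    have h2ne : (x + w) ^ 2 ≠ 0 := pow_ne_zero 2 h1.ne'
    field_simp
  have hd2 : deriv (fun y' => deriv (fun y'' => v t x y'') y') y
      = p * ((p - 1) * (x + y) ^ (p - 1 - 1) * u t z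
            + (x + y) ^ (p - 1) * (uz t z * (x / (x + y) ^ 2)))
        + x * ((p - 2) * (x + y) ^ (p - 2 - 1) * uz t z
            + (x + y) ^ (p - 2) * (uzz t z * (x / (x + y) ^ 2))) := by
    rw [Filter.EventuallyEq.deriv_eq hEq]
    have g1 := (auxy x (p - 1) y (u t) (uz t z) hxy (huz t ht z hz)).const_mul p
    have g2 := (auxy x (p - 2) y (uz t) (uzz t z) hxy (huzz t ht z hz)).const_mul x
    exact (g1.add g2).deriv
  rw [hdt, hdx, hdy, hd2, hv]
  -- reduce rpow exponents
  have hp2 : (x + y) ^ (p - 1) = (x + y) ^ p / (x + y) := by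
    rw [Real.rpow_sub hxy, Real.rpow_one]
  have hp3 : (x + y) ^ (p - 2) = (x + y) ^ p / (x + y) ^ 2 := by
    rw [Real.rpow_sub hxy, ← Real.rpow_natCast (x + y) 2]; norm_num
  have hp4 : (x + y) ^ (p - 1 - 1) = (x + y) ^ p / (x + y) ^ 2 := by
    rw [show p - 1 - 1 = p - 2 by ring]; exact hp3
  have hp5 : (x + y) ^ (p - 2 - 1) = (x + y) ^ p / (x + y) ^ 3 := by
    rw [show p - 2 - 1 = p - 3 by ring, Real.rpow_sub hxy, ← Real.rpow_natCast (x + y) 3]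
    norm_num
  rw [hp4, hp5, hp2, hp3]
  -- eliminate th/A relations
  have hps : (1 - p) * sig ^ 2 ≠ 0 := by
    have : (1 : ℝ) - p ≠ 0 := by linarith
    positivity
  have hmu : mu0 = r + (1 - p) * sig ^ 2 * th := by
    rw [hth]; field_simp; rw [mul_div_cancel_left₀ _ (by linarith : (1:ℝ) - p ≠ 0)]; ring
  subst hA hmu
  simp only [hzdef]
  have h2ne : (x + y) ^ 2 ≠ 0 := pow_ne_zero 2 hsne
  have h3ne : (x + y) ^ 3 ≠ 0 := pow_ne_zero 3 hsne
  field_simp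
  ring
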